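/- arXiv:1312.2582 — 3 statements merged into one kernel-verified Lean document; each statement's English description precedes it below -/
import Mathlib

section
/- For every a > 0, the function T_a is integrable on ℝ and ∫_{−∞}^{∞} T_a(x) dx = −π/a. Equivalently, ∫_{−∞}^{∞} (si(a|x|)·sin(a|x|) + ci(a|x|)·cos(a|x|)) dx = −π/a. -/
open Filter MeasureTheory Topology

/-- The sine integral `si(x) = -∫_x^∞ sin t / t dt`, defined via the improper
(limit of interval integrals) form. -/
noncomputable def si (x : ℝ) : ℝ :=
  - limUnder Filter.atTop (fun R : ℝ => ∫ t in x..R, Real.sin t / t)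

/-- The cosine integral `ci(x) = -∫_x^∞ cos t / t dt`, defined via the improper
(limit of interval integrals) form. -/
noncomputable def ci (x : ℝ) : ℝ :=
  - limUnder Filter.atTop (fun R : ℝ => ∫ t in x..R, Real.cos t / t)

/-- The kernel `S_a(x) = sign(x) (si(a|x|) cos(a|x|) - ci(a|x|) sin(a|x|))`, with `S_a(0)=0`. -/
noncomputable def Sker (a x : ℝ) : ℝ :=
  Real.sign x * (si (a * |x|) * Real.cos (a * |x|) - ci (a * |x|) * Real.sin (a * |x|))

/-- The kernel `T_a(x) = si(a|x|) sin(a|x|) + ci(a|x|) cos(a|x|)`. -/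
noncomputable def Tker (a x : ℝ) : ℝ :=
  si (a * |x|) * Real.sin (a * |x|) + ci (a * |x|) * Real.cos (a * |x|)

open Set Real


lemma rpow_neg_nat {t : ℝ} (ht : 0 ≤ t) (n : ℕ) : t ^ (-(n:ℝ)) = (t^n)⁻¹ := by
  rw [Real.rpow_neg ht, Real.rpow_natCast]

lemma abs_setIntegral_le {f g : ℝ → ℝ} {s : Set ℝ} (hs : MeasurableSet s)
    (hg : IntegrableOn g s) (h : ∀ t ∈ s, |f t| ≤ g t) :
    |∫ t in s, f t| ≤ ∫ t in s, g t := by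
  rw [← Real.norm_eq_abs]
  apply norm_integral_le_of_norm_le hg
  filter_upwards [ae_restrict_mem hs] with t ht
  rw [Real.norm_eq_abs]; exact h t ht

lemma integrableOn_inv_sq {c : ℝ} (hc : 0 < c) :
    IntegrableOn (fun t : ℝ => (t^2)⁻¹) (Ioi c) := by
  have h := integrableOn_Ioi_rpow_of_lt (by norm_num : (-2:ℝ) < -1) hc
  apply h.congr_fun ?_ measurableSet_Ioi
  intro t ht
  show t ^ (-2:ℝ) = (t^2)⁻¹
  rw [show (-2:ℝ) = -((2:ℕ):ℝ) by norm_num, rpow_neg_nat (le_of_lt (hc.trans ht))]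

lemma integral_Ioi_inv_sq {c : ℝ} (hc : 0 < c) :
    ∫ t in Ioi c, (t^2)⁻¹ = c⁻¹ := by
  have h := integral_Ioi_rpow_of_lt (by norm_num : (-2:ℝ) < -1) hc
  rw [show (-2:ℝ)+1 = -1 by norm_num] at h
  have h2 : ∫ t in Ioi c, (t^2)⁻¹ = ∫ t in Ioi c, t ^ (-2:ℝ) :=
    setIntegral_congr_fun measurableSet_Ioi (fun t (ht : t ∈ Ioi c) => by
      show (t^2)⁻¹ = t ^ (-2:ℝ)
      rw [show (-2:ℝ) = -((2:ℕ):ℝ) by norm_num, rpow_neg_nat (le_of_lt (hc.trans ht))])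
  rw [h2, h, Real.rpow_neg_one]
  field_simp

lemma integrableOn_inv_cube {c : ℝ} (hc : 0 < c) :
    IntegrableOn (fun t : ℝ => (t^3)⁻¹) (Ioi c) := by
  have h := integrableOn_Ioi_rpow_of_lt (by norm_num : (-3:ℝ) < -1) hc
  apply h.congr_fun ?_ measurableSet_Ioi
  intro t ht
  show t ^ (-3:ℝ) = (t^3)⁻¹
  rw [show (-3:ℝ) = -((3:ℕ):ℝ) by norm_num, rpow_neg_nat (le_of_lt (hc.trans ht))]

lemma integral_Ioi_inv_cube {c : ℝ} (hc : 0 < c) :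
    ∫ t in Ioi c, (t^3)⁻¹ = (c^2)⁻¹/2 := by
  have h := integral_Ioi_rpow_of_lt (by norm_num : (-3:ℝ) < -1) hc
  rw [show (-3:ℝ)+1 = -2 by norm_num] at h
  have h2 : ∫ t in Ioi c, (t^3)⁻¹ = ∫ t in Ioi c, t ^ (-3:ℝ) :=
    setIntegral_congr_fun measurableSet_Ioi (fun t (ht : t ∈ Ioi c) => by
      show (t^3)⁻¹ = t ^ (-3:ℝ)
      rw [show (-3:ℝ) = -((3:ℕ):ℝ) by norm_num, rpow_neg_nat (le_of_lt (hc.trans ht))])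
  rw [h2, h, show (-2:ℝ) = -((2:ℕ):ℝ) by norm_num, rpow_neg_nat hc.le]
  field_simp
  norm_num



lemma integral_exp_neg_mul {t : ℝ} (ht : 0 < t) :
    ∫ s in Ioi (0:ℝ), Real.exp (-(t*s)) = 1/t := by
  have hd : ∀ s ∈ Ici (0:ℝ), HasDerivAt (fun s => -Real.exp (-(t*s))/t) (Real.exp (-(t*s))) s := by
    intro s _
    have h1 : HasDerivAt (fun s : ℝ => -(t*s)) (-t) s := by
      have h := (hasDerivAt_id s).const_mul t; simp at h; exact h.neg
    have := ((Real.hasDerivAt_exp (-(t*s))).comp s h1).neg.div_const t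
    refine this.congr_deriv ?_
    field_simp
  have hi : IntegrableOn (fun s => Real.exp (-(t*s))) (Ioi (0:ℝ)) := by
    simpa [neg_mul] using exp_neg_integrableOn_Ioi 0 ht
  have htend : Tendsto (fun s => -Real.exp (-(t*s))/t) atTop (𝓝 0) := by
    have h2 : Tendsto (fun s : ℝ => -(t*s)) atTop atBot := by
      apply tendsto_neg_atBot_iff.2
      simpa using (tendsto_const_mul_atTop_of_pos ht).2 tendsto_id
    have := (Real.tendsto_exp_atBot.comp h2).neg.div_const t
    simpa using this
  have := integral_Ioi_of_hasDerivAt_of_tendsto' hd hi htend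
  rw [this]; simp; ring


lemma hasDerivAt_J (s t : ℝ) :
    HasDerivAt (fun t => -Real.exp (-(s*t)) * (Real.cos t + s * Real.sin t)/(1+s^2))
      (Real.exp (-(s*t)) * Real.sin t) t := by
  have h1 : HasDerivAt (fun t : ℝ => -(s*t)) (-s) t := by
    have h := (hasDerivAt_id t).const_mul s; simp at h; exact h.neg
  have he : HasDerivAt (fun t : ℝ => Real.exp (-(s*t))) (Real.exp (-(s*t)) * (-s)) t :=
    by have := (Real.hasDerivAt_exp (-(s*t))).comp t h1; exact this
  have hc : HasDerivAt (fun t : ℝ => Real.cos t + s * Real.sin t)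
      (-Real.sin t + s * Real.cos t) t :=
    (Real.hasDerivAt_cos t).add ((Real.hasDerivAt_sin t).const_mul s)
  have := ((he.mul hc).neg.div_const (1+s^2))
  have hs : 1 + s^2 ≠ 0 := by positivity
  refine HasDerivAt.congr_of_eventuallyEq (this.congr_deriv ?_) (Eventually.of_forall fun x => ?_)
  · rw [div_eq_iff hs]; ring
  · simp only [Pi.neg_apply, Pi.mul_apply]; ring
lemma integral_exp_sin (s R : ℝ) :
    ∫ t in (0:ℝ)..R, Real.exp (-(s*t)) * Real.sin t
      = (1 - Real.exp (-(s*R)) * (Real.cos R + s * Real.sin R))/(1+s^2) := by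
  have hs : 1 + s^2 ≠ 0 := by positivity
  have key := intervalIntegral.integral_eq_sub_of_hasDerivAt (a := (0:ℝ)) (b := R)
    (f := fun t => -Real.exp (-(s*t)) * (Real.cos t + s * Real.sin t)/(1+s^2))
    (fun t _ => hasDerivAt_J s t)
    (by apply Continuous.intervalIntegrable; continuity)
  rw [key]
  simp
  ring



lemma fubini_step {R : ℝ} (hR : 0 < R) :
    ∫ t in Ioc (0:ℝ) R, Real.sin t / t
      = ∫ s in Ioi (0:ℝ), ∫ t in Ioc (0:ℝ) R, Real.sin t * Real.exp (-(t*s)) := by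
  set μ := volume.restrict (Ioc (0:ℝ) R)
  set ν := volume.restrict (Ioi (0:ℝ))
  set f : ℝ → ℝ → ℝ := fun t s => Real.sin t * Real.exp (-(t*s)) with hf
  have hcont : Continuous (Function.uncurry f) := by
    apply Continuous.mul
    · exact Real.continuous_sin.comp continuous_fst
    · exact Real.continuous_exp.comp (continuous_fst.mul continuous_snd).neg
  have h1f : AEStronglyMeasurable (Function.uncurry f) (μ.prod ν) :=
    hcont.aestronglyMeasurable
  have hnorm : ∀ t ∈ Ioc (0:ℝ) R, ∀ s : ℝ, ‖f t s‖ = |Real.sin t| * Real.exp (-(t*s)) := by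
    intro t _ s
    simp [hf, abs_mul, abs_of_pos (Real.exp_pos _)]
  have hinner : ∀ t ∈ Ioc (0:ℝ) R, ∫ s in Ioi (0:ℝ), ‖f t s‖ = |Real.sin t| / t := by
    intro t ht
    calc ∫ s in Ioi (0:ℝ), ‖f t s‖ = ∫ s in Ioi (0:ℝ), |Real.sin t| * Real.exp (-(t*s)) := by
          exact setIntegral_congr_fun measurableSet_Ioi (fun s _ => hnorm t ht s)
      _ = |Real.sin t| * (1/t) := by
          rw [integral_const_mul, integral_exp_neg_mul ht.1]
      _ = |Real.sin t| / t := by ring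
  have hint : Integrable (Function.uncurry f) (μ.prod ν) := by
    rw [integrable_prod_iff h1f]
    constructor
    · filter_upwards [ae_restrict_mem measurableSet_Ioc] with t ht
      have := ((exp_neg_integrableOn_Ioi 0 ht.1).const_mul (Real.sin t))
      simpa [hf, neg_mul] using this
    · apply Integrable.mono' (g := fun _ : ℝ => (1:ℝ))
      · exact integrableOn_const measure_Ioc_lt_top.ne
      · exact h1f.norm.integral_prod_right'
      · filter_upwards [ae_restrict_mem measurableSet_Ioc] with t ht
        have : (∫ (y : ℝ), ‖Function.uncurry f (t, y)‖ ∂ν) = |Real.sin t| / t := hinner t ht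
        rw [this]
        rw [Real.norm_eq_abs, abs_of_nonneg (div_nonneg (abs_nonneg _) ht.1.le)]
        rw [div_le_one ht.1]
        calc |Real.sin t| ≤ |t| := Real.abs_sin_le_abs
          _ = t := abs_of_pos ht.1
  have swap := integral_integral_swap (f := f) hint
  rw [← swap]
  apply setIntegral_congr_fun measurableSet_Ioc
  intro t ht
  simp only [hf]
  rw [integral_const_mul, integral_exp_neg_mul ht.1]
  ring



noncomputable def err (R : ℝ) : ℝ :=
  ∫ s in Ioi (0:ℝ), Real.exp (-(s*R)) * (Real.cos R + s * Real.sin R)/(1+s^2)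

lemma err_ptwise {R s : ℝ} (hs0 : 0 < s) :
    ‖Real.exp (-(s*R)) * (Real.cos R + s * Real.sin R)/(1+s^2)‖ ≤ 2 * Real.exp (-(R*s)) := by
  have h1 : (0:ℝ) < 1 + s^2 := by positivity
  rw [Real.norm_eq_abs, abs_div, abs_mul, abs_of_pos (Real.exp_pos _), abs_of_pos h1]
  rw [div_le_iff₀ h1, mul_comm s R]
  have hb : |Real.cos R + s * Real.sin R| ≤ 1 + s := by
    calc |Real.cos R + s * Real.sin R| ≤ |Real.cos R| + |s * Real.sin R| := abs_add_le _ _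
      _ ≤ 1 + s * 1 := by
          apply add_le_add (Real.abs_cos_le_one R)
          rw [abs_mul, abs_of_pos hs0]
          exact mul_le_mul_of_nonneg_left (Real.abs_sin_le_one _) hs0.le
      _ = 1 + s := by ring
  have h2s : 1 + s ≤ 2 * (1 + s^2) := by nlinarith
  calc Real.exp (-(R*s)) * |Real.cos R + s * Real.sin R|
      ≤ Real.exp (-(R*s)) * (2 * (1+s^2)) :=
        mul_le_mul_of_nonneg_left (hb.trans h2s) (Real.exp_pos _).le
    _ = 2 * Real.exp (-(R*s)) * (1+s^2) := by ring

lemma exp2_int {R : ℝ} (hR : 0 < R) :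
    Integrable (fun s => 2 * Real.exp (-(R*s))) (volume.restrict (Ioi (0:ℝ))) := by
  have := (exp_neg_integrableOn_Ioi 0 hR).const_mul 2
  simpa [neg_mul] using this

lemma err_integrable {R : ℝ} (hR : 0 < R) :
    IntegrableOn (fun s => Real.exp (-(s*R)) * (Real.cos R + s * Real.sin R)/(1+s^2))
      (Ioi (0:ℝ)) := by
  apply Integrable.mono' (exp2_int hR)
  · apply Continuous.aestronglyMeasurable
    have h2 : ∀ s : ℝ, (1:ℝ)+s^2 ≠ 0 := fun s => by positivity
    exact (((Real.continuous_exp.comp ((continuous_id.mul continuous_const).neg)).mul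
      (continuous_const.add (continuous_id.mul continuous_const))).div
      (continuous_const.add (continuous_pow 2)) h2)
  · filter_upwards [ae_restrict_mem measurableSet_Ioi] with s hs
    exact err_ptwise hs

lemma err_small {R : ℝ} (hR : 0 < R) : |err R| ≤ 2 / R := by
  have key : ∀ᵐ s ∂(volume.restrict (Ioi (0:ℝ))),
      ‖Real.exp (-(s*R)) * (Real.cos R + s * Real.sin R)/(1+s^2)‖ ≤ 2 * Real.exp (-(R*s)) := by
    filter_upwards [ae_restrict_mem measurableSet_Ioi] with s hs
    exact err_ptwise hs
  have h2 := norm_integral_le_of_norm_le (exp2_int hR) key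
  rw [Real.norm_eq_abs] at h2
  calc |err R| ≤ ∫ s in Ioi (0:ℝ), 2 * Real.exp (-(R*s)) := h2
    _ = 2 * (1/R) := by rw [integral_const_mul, integral_exp_neg_mul hR]
    _ = 2 / R := by ring

lemma dirichlet : Tendsto (fun R => ∫ t in (0:ℝ)..R, Real.sin t / t) atTop (𝓝 (π/2)) := by
  have heq : ∀ᶠ R in atTop, ∫ t in (0:ℝ)..R, Real.sin t / t = π/2 - err R := by
    filter_upwards [eventually_gt_atTop (0:ℝ)] with R hR
    rw [intervalIntegral.integral_of_le hR.le, fubini_step hR]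
    have hptwise : ∀ s ∈ Ioi (0:ℝ),
        (∫ t in Ioc (0:ℝ) R, Real.sin t * Real.exp (-(t*s)))
          = (1+s^2)⁻¹ - Real.exp (-(s*R)) * (Real.cos R + s * Real.sin R)/(1+s^2) := by
      intro s _
      rw [← intervalIntegral.integral_of_le hR.le]
      have h3 : ∀ t : ℝ, Real.sin t * Real.exp (-(t*s)) = Real.exp (-(s*t)) * Real.sin t := by
        intro t; rw [mul_comm t s]; ring
      simp_rw [h3, integral_exp_sin s R]
      have h1 : (1:ℝ) + s^2 ≠ 0 := by positivity
      field_simp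
    rw [setIntegral_congr_fun measurableSet_Ioi hptwise]
    rw [integral_sub integrable_inv_one_add_sq.integrableOn (err_integrable hR)]
    rw [integral_Ioi_inv_one_add_sq]
    simp [err, Real.arctan_zero]
  apply Tendsto.congr' (by filter_upwards [heq] with R h; exact h.symm)
  have herr : Tendsto err atTop (𝓝 0) := by
    apply squeeze_zero_norm' (a := fun R => 2/R)
    · filter_upwards [eventually_gt_atTop (0:ℝ)] with R hR
      rw [Real.norm_eq_abs]; exact err_small hR
    · exact tendsto_const_nhds.div_atTop tendsto_id
  simpa using (tendsto_const_nhds.sub herr)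



noncomputable def Cs (x : ℝ) : ℝ := ∫ t in Ioi x, Real.sin t / t^2
noncomputable def Cc (x : ℝ) : ℝ := ∫ t in Ioi x, Real.cos t / t^2

lemma sin_div_sq_bound {t : ℝ} (ht : 0 < t) : |Real.sin t / t^2| ≤ (t^2)⁻¹ := by
  rw [abs_div, abs_of_pos (by positivity : (0:ℝ) < t^2), div_le_iff₀ (by positivity)]
  calc |Real.sin t| ≤ 1 := Real.abs_sin_le_one t
    _ = (t^2)⁻¹ * t^2 := by field_simp

lemma cos_div_sq_bound {t : ℝ} (ht : 0 < t) : |Real.cos t / t^2| ≤ (t^2)⁻¹ := by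
  rw [abs_div, abs_of_pos (by positivity : (0:ℝ) < t^2), div_le_iff₀ (by positivity)]
  calc |Real.cos t| ≤ 1 := Real.abs_cos_le_one t
    _ = (t^2)⁻¹ * t^2 := by field_simp

lemma integrableOn_sin_div_sq {c : ℝ} (hc : 0 < c) :
    IntegrableOn (fun t => Real.sin t / t^2) (Ioi c) := by
  apply Integrable.mono' (integrableOn_inv_sq hc)
  · exact (Real.measurable_sin.div (measurable_id.pow_const 2)).aestronglyMeasurable
  · filter_upwards [ae_restrict_mem measurableSet_Ioi] with t ht
    exact sin_div_sq_bound (hc.trans ht)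

lemma integrableOn_cos_div_sq {c : ℝ} (hc : 0 < c) :
    IntegrableOn (fun t => Real.cos t / t^2) (Ioi c) := by
  apply Integrable.mono' (integrableOn_inv_sq hc)
  · exact (Real.measurable_cos.div (measurable_id.pow_const 2)).aestronglyMeasurable
  · filter_upwards [ae_restrict_mem measurableSet_Ioi] with t ht
    exact cos_div_sq_bound (hc.trans ht)

lemma Cs_bound {y : ℝ} (hy : 0 < y) : |Cs y| ≤ y⁻¹ := by
  have := abs_setIntegral_le measurableSet_Ioi (integrableOn_inv_sq hy)
    (fun t ht => sin_div_sq_bound (hy.trans ht))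
  rwa [integral_Ioi_inv_sq hy] at this

lemma Cc_bound {y : ℝ} (hy : 0 < y) : |Cc y| ≤ y⁻¹ := by
  have := abs_setIntegral_le measurableSet_Ioi (integrableOn_inv_sq hy)
    (fun t ht => cos_div_sq_bound (hy.trans ht))
  rwa [integral_Ioi_inv_sq hy] at this

lemma Cs_bound_sqrt {y : ℝ} (hy : 0 < y) : |Cs y| ≤ 2 * y ^ (-(1:ℝ)/2) := by
  have hint : IntegrableOn (fun t : ℝ => t ^ (-(3:ℝ)/2)) (Ioi y) := by
    have := integrableOn_Ioi_rpow_of_lt (by norm_num : (-(3:ℝ)/2) < -1) hy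
    exact this
  have hval : ∫ t in Ioi y, t ^ (-(3:ℝ)/2) = 2 * y ^ (-(1:ℝ)/2) := by
    have h := integral_Ioi_rpow_of_lt (by norm_num : (-(3:ℝ)/2) < -1) hy
    rw [show (-(3:ℝ)/2 + 1) = -(1:ℝ)/2 by norm_num] at h
    rw [h]; ring
  have hpt : ∀ t ∈ Ioi y, |Real.sin t / t^2| ≤ t ^ (-(3:ℝ)/2) := by
    intro t ht
    have ht0 : 0 < t := hy.trans ht
    rcases le_total t 1 with h1 | h1
    · calc |Real.sin t / t^2| = |Real.sin t| / t^2 := by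
            rw [abs_div, abs_of_pos (by positivity : (0:ℝ) < t^2)]
        _ ≤ t / t^2 := by
            apply div_le_div_of_nonneg_right ?_ (by positivity)
            · calc |Real.sin t| ≤ |t| := Real.abs_sin_le_abs
                _ = t := abs_of_pos ht0
        _ = t ^ (-(1:ℝ)) := by rw [Real.rpow_neg_one]; field_simp
        _ ≤ t ^ (-(3:ℝ)/2) :=
            Real.rpow_le_rpow_of_exponent_ge ht0 h1 (by norm_num)
    · calc |Real.sin t / t^2| ≤ (t^2)⁻¹ := sin_div_sq_bound ht0
        _ = t ^ (-(2:ℝ)) := by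
            rw [show (-2:ℝ) = -((2:ℕ):ℝ) by norm_num, rpow_neg_nat ht0.le]
        _ ≤ t ^ (-(3:ℝ)/2) := Real.rpow_le_rpow_of_exponent_le h1 (by norm_num)
  have := abs_setIntegral_le measurableSet_Ioi hint hpt
  rwa [hval] at this




lemma intervalIntegrable_sin_div (x R : ℝ) :
    IntervalIntegrable (fun t => Real.sin t / t) volume x R := by
  rw [intervalIntegrable_iff]
  apply Integrable.mono' (g := fun _ => (1:ℝ))
  · exact integrableOn_const measure_Ioc_lt_top.ne
  · exact (Real.measurable_sin.div measurable_id).aestronglyMeasurable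
  · apply Eventually.of_forall
    intro t
    rw [Real.norm_eq_abs]
    rcases eq_or_ne t 0 with rfl | ht
    · simp
    · rw [abs_div, div_le_one (abs_pos.2 ht)]
      exact Real.abs_sin_le_abs

-- FTC identity for cos: for 0 < x ≤ R
lemma cos_int_eq {x R : ℝ} (hx : 0 < x) (hxR : x ≤ R) :
    ∫ t in x..R, Real.cos t / t
      = Real.sin R/R - Real.sin x/x + ∫ t in x..R, Real.sin t / t^2 := by
  have hsub : uIcc x R ⊆ Ioi (0:ℝ) := by
    rw [uIcc_of_le hxR]
    exact fun t ht => lt_of_lt_of_le hx ht.1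
  have hderiv : ∀ t ∈ uIcc x R,
      HasDerivAt (fun t => Real.sin t / t) (Real.cos t / t - Real.sin t / t^2) t := by
    intro t ht
    have ht0 : t ≠ 0 := (hsub ht).ne'
    have := (Real.hasDerivAt_sin t).div (hasDerivAt_id' t) ht0
    refine this.congr_deriv ?_
    field_simp
  have hcont : ContinuousOn (fun t => Real.cos t / t - Real.sin t / t^2) (uIcc x R) := by
    apply ContinuousOn.sub
    · exact Real.continuous_cos.continuousOn.div continuous_id.continuousOn
        (fun t ht => (hsub ht).ne')
    · exact Real.continuous_sin.continuousOn.div (continuous_pow 2).continuousOn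
        (fun t ht => pow_ne_zero 2 (hsub ht).ne')
  have key := intervalIntegral.integral_eq_sub_of_hasDerivAt hderiv
    (hcont.intervalIntegrable)
  have hsplit : IntervalIntegrable (fun t => Real.sin t / t^2) volume x R := by
    apply ContinuousOn.intervalIntegrable
    exact Real.continuous_sin.continuousOn.div (continuous_pow 2).continuousOn
      (fun t ht => pow_ne_zero 2 (hsub ht).ne')
  have hcos : IntervalIntegrable (fun t => Real.cos t / t) volume x R := by
    apply ContinuousOn.intervalIntegrable
    exact Real.continuous_cos.continuousOn.div continuous_id.continuousOn
      (fun t ht => (hsub ht).ne')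
  have : (fun t => Real.cos t / t - Real.sin t / t^2)
      = fun t => (fun t => Real.cos t / t) t - (fun t => Real.sin t / t^2) t := rfl
  rw [this, intervalIntegral.integral_sub hcos hsplit] at key
  linarith [key]

lemma sin_int_eq {x R : ℝ} (hx : 0 < x) (hxR : x ≤ R) :
    ∫ t in x..R, Real.sin t / t
      = Real.cos x/x - Real.cos R/R - ∫ t in x..R, Real.cos t / t^2 := by
  have hsub : uIcc x R ⊆ Ioi (0:ℝ) := by
    rw [uIcc_of_le hxR]
    exact fun t ht => lt_of_lt_of_le hx ht.1
  have hderiv : ∀ t ∈ uIcc x R,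
      HasDerivAt (fun t => -(Real.cos t / t)) (Real.sin t / t + Real.cos t / t^2) t := by
    intro t ht
    have ht0 : t ≠ 0 := (hsub ht).ne'
    have := ((Real.hasDerivAt_cos t).div (hasDerivAt_id' t) ht0).neg
    refine this.congr_deriv ?_
    field_simp
    ring
  have hcont2 : ContinuousOn (fun t => Real.cos t / t^2) (uIcc x R) :=
    Real.continuous_cos.continuousOn.div (continuous_pow 2).continuousOn
      (fun t ht => pow_ne_zero 2 (hsub ht).ne')
  have hcont : ContinuousOn (fun t => Real.sin t / t + Real.cos t / t^2) (uIcc x R) := by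
    apply ContinuousOn.add
    · exact Real.continuous_sin.continuousOn.div continuous_id.continuousOn
        (fun t ht => (hsub ht).ne')
    · exact hcont2
  have key := intervalIntegral.integral_eq_sub_of_hasDerivAt hderiv
    (hcont.intervalIntegrable)
  have hsplit : IntervalIntegrable (fun t => Real.cos t / t^2) volume x R :=
    hcont2.intervalIntegrable
  have : (fun t => Real.sin t / t + Real.cos t / t^2)
      = fun t => (fun t => Real.sin t / t) t + (fun t => Real.cos t / t^2) t := rfl
  rw [this, intervalIntegral.integral_add (intervalIntegrable_sin_div x R) hsplit] at key
  have h2 : -(Real.cos R / R) - -(Real.cos x / x) = Real.cos x/x - Real.cos R/R := by ring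
  linarith [key]

lemma tendsto_sin_over_x : Tendsto (fun R : ℝ => Real.sin R / R) atTop (𝓝 0) := by
  apply squeeze_zero_norm' (a := fun R : ℝ => 1/R)
  · filter_upwards [eventually_gt_atTop (0:ℝ)] with R hR
    rw [Real.norm_eq_abs, abs_div, abs_of_pos hR]
    apply div_le_div_of_nonneg_right (Real.abs_sin_le_one R) hR.le
  · exact tendsto_const_nhds.div_atTop tendsto_id

lemma tendsto_cos_over_x : Tendsto (fun R : ℝ => Real.cos R / R) atTop (𝓝 0) := by
  apply squeeze_zero_norm' (a := fun R : ℝ => 1/R)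
  · filter_upwards [eventually_gt_atTop (0:ℝ)] with R hR
    rw [Real.norm_eq_abs, abs_div, abs_of_pos hR]
    apply div_le_div_of_nonneg_right (Real.abs_cos_le_one R) hR.le
  · exact tendsto_const_nhds.div_atTop tendsto_id

lemma tendsto_ci_int {x : ℝ} (hx : 0 < x) :
    Tendsto (fun R : ℝ => ∫ t in x..R, Real.cos t / t) atTop
      (𝓝 (-(Real.sin x/x) + Cs x)) := by
  have h1 : Tendsto (fun R : ℝ => Real.sin R/R - Real.sin x/x + ∫ t in x..R, Real.sin t / t^2)
      atTop (𝓝 (0 - Real.sin x/x + Cs x)) := by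
    apply Tendsto.add
    · exact (tendsto_sin_over_x.sub_const _)
    · exact intervalIntegral_tendsto_integral_Ioi x (integrableOn_sin_div_sq hx) tendsto_id
  have h2 : (-(Real.sin x/x) + Cs x) = 0 - Real.sin x/x + Cs x := by ring
  rw [h2]
  apply h1.congr'
  filter_upwards [eventually_ge_atTop x] with R hR
  exact (cos_int_eq hx hR).symm

lemma tendsto_si_int {x : ℝ} (hx : 0 < x) :
    Tendsto (fun R : ℝ => ∫ t in x..R, Real.sin t / t) atTop
      (𝓝 (Real.cos x/x - Cc x)) := by
  have h1 : Tendsto (fun R : ℝ => Real.cos x/x - Real.cos R/R - ∫ t in x..R, Real.cos t / t^2)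
      atTop (𝓝 (Real.cos x/x - 0 - Cc x)) := by
    apply Tendsto.sub
    · exact tendsto_const_nhds.sub tendsto_cos_over_x
    · exact intervalIntegral_tendsto_integral_Ioi x (integrableOn_cos_div_sq hx) tendsto_id
  have h2 : (Real.cos x/x - Cc x) = Real.cos x/x - 0 - Cc x := by ring
  rw [h2]
  apply h1.congr'
  filter_upwards [eventually_ge_atTop x] with R hR
  exact (sin_int_eq hx hR).symm

lemma ci_eq {x : ℝ} (hx : 0 < x) : ci x = Real.sin x/x - Cs x := by
  rw [ci, (tendsto_ci_int hx).limUnder_eq]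
  ring

lemma si_eq1 {x : ℝ} (hx : 0 < x) : si x = Cc x - Real.cos x/x := by
  rw [si, (tendsto_si_int hx).limUnder_eq]
  ring

lemma tendsto_si_int' (x : ℝ) :
    Tendsto (fun R : ℝ => ∫ t in x..R, Real.sin t / t) atTop
      (𝓝 (π/2 - ∫ t in (0:ℝ)..x, Real.sin t / t)) := by
  have h1 := dirichlet.sub_const (∫ t in (0:ℝ)..x, Real.sin t / t)
  apply h1.congr
  intro R
  rw [intervalIntegral.integral_interval_sub_left (intervalIntegrable_sin_div 0 R)
    (intervalIntegrable_sin_div 0 x)]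

lemma si_eq2 (x : ℝ) : si x = (∫ t in (0:ℝ)..x, Real.sin t / t) - π/2 := by
  rw [si, (tendsto_si_int' x).limUnder_eq]
  ring




lemma hasDerivAt_si {x : ℝ} (hx : 0 < x) : HasDerivAt si (Real.sin x / x) x := by
  have heq : si = fun y => (∫ t in (0:ℝ)..y, Real.sin t / t) - π/2 := funext si_eq2
  rw [heq]
  apply HasDerivAt.sub_const
  apply intervalIntegral.integral_hasDerivAt_right (intervalIntegrable_sin_div 0 x)
  · exact (Real.measurable_sin.div measurable_id).aestronglyMeasurable.stronglyMeasurableAtFilter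
  · exact ((Real.continuous_sin.continuousAt).div continuousAt_id hx.ne')

lemma hasDerivAt_Cs {x : ℝ} (hx : 0 < x) : HasDerivAt Cs (-(Real.sin x / x^2)) x := by
  set c := x/2 with hc
  have hc0 : 0 < c := by positivity
  have hmem : Ioi c ∈ 𝓝 x := isOpen_Ioi.mem_nhds (by simp [hc]; linarith)
  have heq : ∀ y ∈ Ioi c, Cs y = Cs c - ∫ t in c..y, Real.sin t / t^2 := by
    intro y hy
    have hcy : c ≤ y := (le_of_lt hy)
    have hunion : Ioc c y ∪ Ioi y = Ioi c := Ioc_union_Ioi_eq_Ioi hcy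
    have hint1 : IntegrableOn (fun t => Real.sin t / t^2) (Ioc c y) :=
      (integrableOn_sin_div_sq hc0).mono_set Ioc_subset_Ioi_self
    have hint2 : IntegrableOn (fun t => Real.sin t / t^2) (Ioi y) :=
      (integrableOn_sin_div_sq hc0).mono_set (Ioi_subset_Ioi hcy)
    have := setIntegral_union (Ioc_disjoint_Ioi le_rfl) measurableSet_Ioi hint1 hint2
    rw [hunion] at this
    have h2 : Cs c = (∫ t in Ioc c y, Real.sin t / t^2) + Cs y := this
    rw [intervalIntegral.integral_of_le hcy]
    rw [h2]; ring
  have hd : HasDerivAt (fun y => Cs c - ∫ t in c..y, Real.sin t / t^2)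
      (-(Real.sin x / x^2)) x := by
    apply HasDerivAt.const_sub
    apply intervalIntegral.integral_hasDerivAt_right
    · apply ContinuousOn.intervalIntegrable
      apply Real.continuous_sin.continuousOn.div (continuous_pow 2).continuousOn
      intro t ht
      rw [uIcc_of_le (by linarith : c ≤ x)] at ht
      exact pow_ne_zero 2 (ne_of_gt (lt_of_lt_of_le hc0 ht.1))
    · exact (Real.measurable_sin.div (measurable_id.pow_const 2)).aestronglyMeasurable.stronglyMeasurableAtFilter
    · exact (Real.continuous_sin.continuousAt).div (continuousAt_id.pow 2) (by positivity)
  apply hd.congr_of_eventuallyEq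
  filter_upwards [hmem] with y hy
  exact heq y hy

lemma hasDerivAt_ci {x : ℝ} (hx : 0 < x) : HasDerivAt ci (Real.cos x / x) x := by
  have hd : HasDerivAt (fun y => Real.sin y/y - Cs y) (Real.cos x / x) x := by
    have h1 : HasDerivAt (fun y => Real.sin y/y)
        ((Real.cos x * x - Real.sin x)/x^2) x := by
      have := (Real.hasDerivAt_sin x).div (hasDerivAt_id' x) hx.ne'
      refine this.congr_deriv ?_
      field_simp
    have := h1.sub (hasDerivAt_Cs hx)
    refine this.congr_deriv ?_
    field_simp
    ring
  apply hd.congr_of_eventuallyEq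
  filter_upwards [isOpen_Ioi.mem_nhds hx] with y hy
  exact ci_eq hy




lemma T_eq {y : ℝ} (hy : 0 < y) :
    si y * Real.sin y + ci y * Real.cos y = Real.sin y * Cc y - Real.cos y * Cs y := by
  rw [si_eq1 hy, ci_eq hy]; ring

lemma integrableOn_sin_shift {y : ℝ} (hy : 0 < y) :
    IntegrableOn (fun t => Real.sin (t - y) / t^2) (Ioi y) := by
  apply Integrable.mono' (integrableOn_inv_sq hy)
  · exact ((Real.measurable_sin.comp (measurable_id.sub_const y)).div
      (measurable_id.pow_const 2)).aestronglyMeasurable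
  · filter_upwards [ae_restrict_mem measurableSet_Ioi] with t ht
    have ht0 : (0:ℝ) < t := hy.trans ht
    rw [Real.norm_eq_abs, abs_div, abs_of_pos (by positivity : (0:ℝ) < t^2),
      div_le_iff₀ (by positivity)]
    calc |Real.sin (t-y)| ≤ 1 := Real.abs_sin_le_one _
      _ = (t^2)⁻¹ * t^2 := by field_simp

lemma integrableOn_cos_shift_cube {y : ℝ} (hy : 0 < y) :
    IntegrableOn (fun t => 2 * (Real.cos (t - y) / t^3)) (Ioi y) := by
  apply Integrable.mono' ((integrableOn_inv_cube hy).const_mul 2)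
  · exact (((Real.measurable_cos.comp (measurable_id.sub_const y)).div
      (measurable_id.pow_const 3)).const_mul 2).aestronglyMeasurable
  · filter_upwards [ae_restrict_mem measurableSet_Ioi] with t ht
    have ht0 : (0:ℝ) < t := hy.trans ht
    rw [Real.norm_eq_abs, abs_mul, abs_div, abs_of_pos (by positivity : (0:ℝ) < t^3),
      abs_of_pos (by norm_num : (0:ℝ) < 2)]
    rw [mul_le_mul_iff_right₀ (by norm_num : (0:ℝ) < 2), div_le_iff₀ (by positivity)]
    calc |Real.cos (t-y)| ≤ 1 := Real.abs_cos_le_one _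
      _ = (t^3)⁻¹ * t^3 := by field_simp

lemma T_eq_int {y : ℝ} (hy : 0 < y) :
    Real.sin y * Cc y - Real.cos y * Cs y = -∫ t in Ioi y, Real.sin (t - y) / t^2 := by
  rw [Cc, Cs, ← integral_const_mul, ← integral_const_mul,
    ← integral_sub ((integrableOn_cos_div_sq hy).const_mul _)
      ((integrableOn_sin_div_sq hy).const_mul _), ← integral_neg]
  apply setIntegral_congr_fun measurableSet_Ioi
  intro t ht
  show Real.sin y * (Real.cos t / t^2) - Real.cos y * (Real.sin t / t^2)
    = -(Real.sin (t - y) / t^2)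
  rw [Real.sin_sub]
  field_simp
  ring

lemma byparts_shift {y : ℝ} (hy : 0 < y) :
    ∫ t in Ioi y, (Real.sin (t - y) / t^2 + 2 * (Real.cos (t - y) / t^3)) = (y^2)⁻¹ := by
  have hderiv : ∀ t ∈ Ioi y, HasDerivAt (fun t => -Real.cos (t - y) / t^2)
      (Real.sin (t - y) / t^2 + 2 * (Real.cos (t - y) / t^3)) t := by
    intro t ht
    have ht0 : (0:ℝ) < t := hy.trans ht
    have h1 : HasDerivAt (fun t : ℝ => -Real.cos (t - y)) (Real.sin (t - y)) t := by
      have h0 : HasDerivAt (fun t : ℝ => t - y) 1 t := (hasDerivAt_id t).sub_const y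
      have := ((Real.hasDerivAt_cos (t - y)).comp t h0).neg
      exact this.congr_deriv (by simp)
    have h2 := h1.div (hasDerivAt_pow 2 t) (by positivity : (t:ℝ)^2 ≠ 0)
    refine h2.congr_deriv ?_
    have ht2 : (t:ℝ)^2 ≠ 0 := by positivity
    field_simp
    ring
  have hint : IntegrableOn
      (fun t => Real.sin (t - y) / t^2 + 2 * (Real.cos (t - y) / t^3)) (Ioi y) :=
    (integrableOn_sin_shift hy).add (integrableOn_cos_shift_cube hy)
  have htend : Tendsto (fun t => -Real.cos (t - y) / t^2) atTop (𝓝 0) := by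
    apply squeeze_zero_norm' (a := fun t : ℝ => (t^2)⁻¹)
    · filter_upwards [eventually_gt_atTop (0:ℝ)] with t ht
      rw [Real.norm_eq_abs, abs_div, abs_of_pos (by positivity : (0:ℝ) < t^2),
        div_le_iff₀ (by positivity), abs_neg]
      calc |Real.cos (t-y)| ≤ 1 := Real.abs_cos_le_one _
        _ = (t^2)⁻¹ * t^2 := by field_simp
    · exact (tendsto_pow_atTop (by norm_num : 2 ≠ 0)).inv_tendsto_atTop
  have hcont : ContinuousWithinAt (fun t => -Real.cos (t - y) / t^2) (Ici y) y := by
    apply ContinuousWithinAt.div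
    · exact ((Real.continuous_cos.comp (continuous_id.sub continuous_const)).neg).continuousWithinAt
    · exact (continuous_pow 2).continuousWithinAt
    · positivity
  have := integral_Ioi_of_hasDerivAt_of_tendsto hcont hderiv hint htend
  rw [this]
  simp [Real.cos_zero]
  field_simp

lemma bound_T2 {y : ℝ} (hy : 0 < y) :
    |si y * Real.sin y + ci y * Real.cos y| ≤ 2/y^2 := by
  rw [T_eq hy, T_eq_int hy, abs_neg]
  have hsplit : ∫ t in Ioi y, Real.sin (t - y) / t^2
      = (y^2)⁻¹ - ∫ t in Ioi y, 2 * (Real.cos (t - y) / t^3) := by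
    rw [← byparts_shift hy,
      integral_add (integrableOn_sin_shift hy) (integrableOn_cos_shift_cube hy)]
    ring
  rw [hsplit]
  have hb : |∫ t in Ioi y, 2 * (Real.cos (t - y) / t^3)| ≤ (y^2)⁻¹ := by
    have := abs_setIntegral_le (f := fun t => 2 * (Real.cos (t - y) / t^3))
      (g := fun t => 2 * (t^3)⁻¹) measurableSet_Ioi
      ((integrableOn_inv_cube hy).const_mul 2) (fun t ht => ?_)
    · simp only [integral_const_mul] at this ⊢
      rw [integral_Ioi_inv_cube hy] at this
      calc |2 * ∫ t in Ioi y, Real.cos (t - y) / t^3| ≤ 2 * ((y^2)⁻¹/2) := this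
        _ = (y^2)⁻¹ := by ring
    · have ht0 : (0:ℝ) < t := hy.trans ht
      show |2 * (Real.cos (t - y) / t^3)| ≤ 2 * (t^3)⁻¹
      rw [abs_mul, abs_of_pos (by norm_num : (0:ℝ) < 2), abs_div,
        abs_of_pos (by positivity : (0:ℝ) < t^3)]
      rw [mul_le_mul_iff_right₀ (by norm_num : (0:ℝ) < 2), div_le_iff₀ (by positivity)]
      calc |Real.cos (t-y)| ≤ 1 := Real.abs_cos_le_one _
        _ = (t^3)⁻¹ * t^3 := by field_simp
  calc |(y^2)⁻¹ - ∫ t in Ioi y, 2 * (Real.cos (t - y) / t^3)|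
      ≤ |(y^2)⁻¹| + |∫ t in Ioi y, 2 * (Real.cos (t - y) / t^3)| := abs_sub _ _
    _ ≤ (y^2)⁻¹ + (y^2)⁻¹ := by
        apply add_le_add _ hb
        rw [abs_of_pos (by positivity : (0:ℝ) < (y^2)⁻¹)]
    _ = 2/y^2 := by ring

lemma bound_T1 {y : ℝ} (hy : 0 < y) :
    |si y * Real.sin y + ci y * Real.cos y| ≤ 1 + 2 * y ^ (-(1:ℝ)/2) := by
  rw [T_eq hy]
  calc |Real.sin y * Cc y - Real.cos y * Cs y|
      ≤ |Real.sin y * Cc y| + |Real.cos y * Cs y| := abs_sub _ _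
    _ ≤ 1 + 2 * y ^ (-(1:ℝ)/2) := by
        apply add_le_add
        · rw [abs_mul]
          calc |Real.sin y| * |Cc y| ≤ |y| * y⁻¹ :=
                mul_le_mul Real.abs_sin_le_abs (Cc_bound hy) (abs_nonneg _) (abs_nonneg _)
            _ = 1 := by rw [abs_of_pos hy]; field_simp
        · rw [abs_mul]
          calc |Real.cos y| * |Cs y| ≤ 1 * (2 * y ^ (-(1:ℝ)/2)) :=
              mul_le_mul (Real.abs_cos_le_one y) (Cs_bound_sqrt hy) (abs_nonneg _) zero_le_one
            _ = 2 * y ^ (-(1:ℝ)/2) := by ring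

lemma si_bound {y : ℝ} (hy : 0 < y) : |si y| ≤ 2/y := by
  rw [si_eq1 hy]
  calc |Cc y - Real.cos y/y| ≤ |Cc y| + |Real.cos y/y| := abs_sub _ _
    _ ≤ y⁻¹ + y⁻¹ := by
        apply add_le_add (Cc_bound hy)
        rw [abs_div, abs_of_pos hy, div_le_iff₀ hy]
        calc |Real.cos y| ≤ 1 := Real.abs_cos_le_one y
          _ = y⁻¹ * y := by field_simp
    _ = 2/y := by ring

lemma ci_bound {y : ℝ} (hy : 0 < y) : |ci y| ≤ 2/y := by
  rw [ci_eq hy]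
  calc |Real.sin y/y - Cs y| ≤ |Real.sin y/y| + |Cs y| := abs_sub _ _
    _ ≤ y⁻¹ + y⁻¹ := by
        apply add_le_add
        · rw [abs_div, abs_of_pos hy, div_le_iff₀ hy]
          calc |Real.sin y| ≤ 1 := Real.abs_sin_le_one y
            _ = y⁻¹ * y := by field_simp
        · exact Cs_bound hy
    _ = 2/y := by ring

lemma tendsto_S_atTop :
    Tendsto (fun y => si y * Real.cos y - ci y * Real.sin y) atTop (𝓝 0) := by
  apply squeeze_zero_norm' (a := fun y : ℝ => 4/y)
  · filter_upwards [eventually_gt_atTop (0:ℝ)] with y hy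
    rw [Real.norm_eq_abs]
    calc |si y * Real.cos y - ci y * Real.sin y|
        ≤ |si y * Real.cos y| + |ci y * Real.sin y| := abs_sub _ _
      _ ≤ 2/y + 2/y := by
          apply add_le_add
          · rw [abs_mul]
            calc |si y| * |Real.cos y| ≤ (2/y) * 1 :=
                mul_le_mul (si_bound hy) (Real.abs_cos_le_one y) (abs_nonneg _)
                  (by positivity)
              _ = 2/y := by ring
          · rw [abs_mul]
            calc |ci y| * |Real.sin y| ≤ (2/y) * 1 :=
                mul_le_mul (ci_bound hy) (Real.abs_sin_le_one y) (abs_nonneg _)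
                  (by positivity)
              _ = 2/y := by ring
      _ = 4/y := by ring
  · exact tendsto_const_nhds.div_atTop tendsto_id

lemma tendsto_si_zero : Tendsto si (𝓝[>] (0:ℝ)) (𝓝 (-(π/2))) := by
  have h1 : Tendsto (fun y => si y + π/2) (𝓝[>] (0:ℝ)) (𝓝 0) := by
    apply squeeze_zero_norm' (a := fun y : ℝ => |y|)
    · apply Eventually.of_forall
      intro y
      rw [si_eq2 y]
      have : (∫ t in (0:ℝ)..y, Real.sin t / t) - π/2 + π/2
          = ∫ t in (0:ℝ)..y, Real.sin t / t := by ring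
      rw [this]
      have hb := intervalIntegral.norm_integral_le_of_norm_le_const
        (f := fun t => Real.sin t / t) (a := 0) (b := y) (C := 1) ?_
      · simpa using hb
      · intro t _
        rw [Real.norm_eq_abs]
        rcases eq_or_ne t 0 with rfl | ht
        · simp
        · rw [abs_div, div_le_one (abs_pos.2 ht)]
          exact Real.abs_sin_le_abs
    · have : Tendsto (fun y : ℝ => |y|) (𝓝 0) (𝓝 0) := by
        simpa using (continuous_abs.tendsto (0:ℝ))
      exact this.mono_left nhdsWithin_le_nhds
  have := h1.sub_const (π/2)
  simpa using this

lemma tendsto_cisin_zero :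
    Tendsto (fun y => ci y * Real.sin y) (𝓝[>] (0:ℝ)) (𝓝 0) := by
  apply squeeze_zero_norm' (a := fun y : ℝ => |Real.sin y| + 2 * y ^ ((1:ℝ)/2))
  · filter_upwards [self_mem_nhdsWithin] with y (hy : (0:ℝ) < y)
    rw [Real.norm_eq_abs, ci_eq hy]
    have key : (Real.sin y/y - Cs y) * Real.sin y
        = (Real.sin y/y) * Real.sin y - Cs y * Real.sin y := by ring
    rw [key]
    calc |(Real.sin y/y) * Real.sin y - Cs y * Real.sin y|
        ≤ |(Real.sin y/y) * Real.sin y| + |Cs y * Real.sin y| := abs_sub _ _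
      _ ≤ |Real.sin y| + 2 * y ^ ((1:ℝ)/2) := by
          apply add_le_add
          · rw [abs_mul]
            apply mul_le_of_le_one_left (abs_nonneg _)
            rw [abs_div, abs_of_pos hy, div_le_one hy]
            calc |Real.sin y| ≤ |y| := Real.abs_sin_le_abs
              _ = y := abs_of_pos hy
          · rw [abs_mul]
            calc |Cs y| * |Real.sin y| ≤ (2 * y ^ (-(1:ℝ)/2)) * y := by
                  apply mul_le_mul (Cs_bound_sqrt hy) ?_ (abs_nonneg _) (by positivity)
                  calc |Real.sin y| ≤ |y| := Real.abs_sin_le_abs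
                    _ = y := abs_of_pos hy
              _ = 2 * y ^ ((1:ℝ)/2) := by
                  rw [mul_assoc]
                  congr 1
                  have h2 : y ^ (-(1:ℝ)/2) * y = y ^ (-(1:ℝ)/2 + 1) :=
                    (Real.rpow_add_one hy.ne' _).symm
                  rw [h2]
                  norm_num
  · have h1 : Tendsto (fun y : ℝ => |Real.sin y| + 2 * y ^ ((1:ℝ)/2)) (𝓝 0) (𝓝 0) := by
      have hs : Tendsto (fun y : ℝ => |Real.sin y|) (𝓝 0) (𝓝 0) := by
        have := (Real.continuous_sin.abs.tendsto (0:ℝ))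
        simpa using this
      have hr : Tendsto (fun y : ℝ => 2 * y ^ ((1:ℝ)/2)) (𝓝 0) (𝓝 0) := by
        have h := (Real.continuousAt_rpow_const 0 ((1:ℝ)/2) (Or.inr (by norm_num))).tendsto
        rw [Real.zero_rpow (by norm_num : ((1:ℝ)/2) ≠ 0)] at h
        have := h.const_mul (2:ℝ)
        simpa using this
      simpa using hs.add hr
    exact h1.mono_left nhdsWithin_le_nhds

lemma tendsto_S_zero :
    Tendsto (fun y => si y * Real.cos y - ci y * Real.sin y) (𝓝[>] (0:ℝ)) (𝓝 (-(π/2))) := by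
  have hc : Tendsto (fun y : ℝ => Real.cos y) (𝓝[>] (0:ℝ)) (𝓝 1) := by
    have := Real.continuous_cos.tendsto (0:ℝ)
    rw [Real.cos_zero] at this
    exact this.mono_left nhdsWithin_le_nhds
  have h1 := tendsto_si_zero.mul hc
  have := h1.sub tendsto_cisin_zero
  simpa using this

lemma hasDerivAt_S {y : ℝ} (hy : 0 < y) :
    HasDerivAt (fun y => si y * Real.cos y - ci y * Real.sin y)
      (-(si y * Real.sin y + ci y * Real.cos y)) y := by
  have h := ((hasDerivAt_si hy).mul (Real.hasDerivAt_cos y)).sub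
    ((hasDerivAt_ci hy).mul (Real.hasDerivAt_sin y))
  refine h.congr_deriv ?_
  field_simp
  ring




lemma integrable_comp_abs' {f : ℝ → ℝ} (hf : IntegrableOn f (Ioi 0)) :
    Integrable (fun x => f |x|) := by
  have hIoi : IntegrableOn (fun x => f |x|) (Ioi 0) := by
    apply hf.congr_fun ?_ measurableSet_Ioi
    intro x hx
    show f x = f |x|
    rw [abs_of_pos hx]
  have int_Iic : IntegrableOn (fun x => f |x|) (Iic 0) := by
    rw [← Measure.map_neg_eq_self (volume : Measure ℝ)]
    have m : MeasurableEmbedding fun x : ℝ => -x := (Homeomorph.neg ℝ).measurableEmbedding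
    rw [m.integrableOn_map_iff]
    simp_rw [Function.comp_def, abs_neg, neg_preimage, neg_Iic, neg_zero]
    exact Iff.mpr integrableOn_Ici_iff_integrableOn_Ioi hIoi
  have h := int_Iic.union hIoi
  rwa [Iic_union_Ioi, integrableOn_univ] at h


/-- `T_a` is integrable on `ℝ` with total integral `-π/a`. -/
theorem stmt2 (a : ℝ) (ha : 0 < a) :
    Integrable (fun x : ℝ => Tker a x) ∧ (∫ x : ℝ, Tker a x) = -Real.pi / a := by
  set u : ℝ → ℝ := fun x => si (a*x) * Real.sin (a*x) + ci (a*x) * Real.cos (a*x) with hu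
  have hTu : (fun x : ℝ => Tker a x) = fun x => u |x| := by
    funext x; simp only [Tker, hu]
  -- continuity of u on Ioi 0
  have hu_cont : ContinuousOn u (Ioi 0) := by
    intro x hx
    have hax : 0 < a*x := mul_pos ha hx
    have hmul : ContinuousAt (fun x : ℝ => a*x) x := (continuous_const.mul continuous_id).continuousAt
    have h1 : ContinuousAt (fun x => si (a*x)) x :=
      ((hasDerivAt_si hax).continuousAt).comp hmul
    have h2 : ContinuousAt (fun x => ci (a*x)) x :=
      ((hasDerivAt_ci hax).continuousAt).comp hmul
    have h3 : ContinuousAt (fun x => Real.sin (a*x)) x :=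
      (Real.continuous_sin.continuousAt).comp hmul
    have h4 : ContinuousAt (fun x => Real.cos (a*x)) x :=
      (Real.continuous_cos.continuousAt).comp hmul
    exact ((h1.mul h3).add (h2.mul h4)).continuousWithinAt
  -- integrability on (0,1]
  have hu_int1 : IntegrableOn u (Ioc 0 1) := by
    apply Integrable.mono' (g := fun x => 1 + 2*a^(-(1:ℝ)/2) * x^(-(1:ℝ)/2))
    · apply Integrable.add
      · exact integrableOn_const measure_Ioc_lt_top.ne
      · have hr : IntervalIntegrable (fun x : ℝ => x ^ (-(1:ℝ)/2)) volume 0 1 :=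
          intervalIntegral.intervalIntegrable_rpow' (by norm_num)
        rw [intervalIntegrable_iff_integrableOn_Ioc_of_le zero_le_one] at hr
        exact hr.const_mul _
    · exact ((hu_cont.mono Ioc_subset_Ioi_self).aestronglyMeasurable measurableSet_Ioc)
    · filter_upwards [ae_restrict_mem measurableSet_Ioc] with x hx
      have hx0 : 0 < x := hx.1
      have hax : 0 < a*x := mul_pos ha hx0
      rw [Real.norm_eq_abs]
      calc |u x| ≤ 1 + 2 * (a*x) ^ (-(1:ℝ)/2) := bound_T1 hax
        _ = 1 + 2*a^(-(1:ℝ)/2) * x^(-(1:ℝ)/2) := by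
            rw [Real.mul_rpow ha.le hx0.le]; ring
  -- integrability on (1,∞)
  have hu_int2 : IntegrableOn u (Ioi 1) := by
    apply Integrable.mono' (g := fun x => (2/a^2) * (x^2)⁻¹)
    · exact (integrableOn_inv_sq one_pos).const_mul _
    · exact ((hu_cont.mono (Ioi_subset_Ioi zero_le_one)).aestronglyMeasurable measurableSet_Ioi)
    · filter_upwards [ae_restrict_mem measurableSet_Ioi] with x hx
      have hx0 : (0:ℝ) < x := lt_trans one_pos hx
      have hax : 0 < a*x := mul_pos ha hx0
      rw [Real.norm_eq_abs]
      calc |u x| ≤ 2/(a*x)^2 := bound_T2 hax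
        _ = (2/a^2) * (x^2)⁻¹ := by field_simp
  have hu_int : IntegrableOn u (Ioi 0) := by
    have := hu_int1.union hu_int2
    rwa [Ioc_union_Ioi_eq_Ioi zero_le_one] at this
  -- the antiderivative Φ
  set Φ : ℝ → ℝ := fun x => -(a⁻¹) * (si (a*x) * Real.cos (a*x) - ci (a*x) * Real.sin (a*x))
    with hΦ
  have hΦd : ∀ x : ℝ, 0 < x → HasDerivAt Φ (u x) x := by
    intro x hx
    have hax : 0 < a*x := mul_pos ha hx
    have hin : HasDerivAt (fun x : ℝ => a*x) a x := by
      simpa using (hasDerivAt_id x).const_mul a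
    have hS := (hasDerivAt_S hax).comp x hin
    have := hS.const_mul (-(a⁻¹))
    refine this.congr_deriv ?_
    simp only [hu, Function.comp]
    field_simp
  have hΦtop : Tendsto Φ atTop (𝓝 0) := by
    have hax : Tendsto (fun x : ℝ => a*x) atTop atTop := by
      simpa using (tendsto_const_mul_atTop_of_pos ha).2 tendsto_id
    have h5 := (tendsto_S_atTop.comp hax).const_mul (-(a⁻¹))
    rw [mul_zero] at h5
    exact h5
  have hΦ0 : Tendsto Φ (𝓝[>] (0:ℝ)) (𝓝 (π/(2*a))) := by
    have hax : Tendsto (fun x : ℝ => a*x) (𝓝[>] (0:ℝ)) (𝓝[>] (0:ℝ)) := by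
      apply tendsto_nhdsWithin_of_tendsto_nhds_of_eventually_within
      · have hco : Continuous fun x : ℝ => a * x := continuous_const.mul continuous_id
        have := hco.tendsto (0:ℝ)
        simp only [mul_zero] at this
        exact this.mono_left nhdsWithin_le_nhds
      · filter_upwards [self_mem_nhdsWithin] with x hx
        exact mul_pos ha hx
    have := (tendsto_S_zero.comp hax).const_mul (-(a⁻¹))
    have heq : -(a⁻¹) * -(π/2) = π/(2*a) := by
      rw [neg_mul_neg, inv_mul_eq_div, div_div]
    rw [heq] at this
    exact this
  have hint_eps : ∀ ε : ℝ, 0 < ε → ∫ x in Ioi ε, u x = -Φ ε := by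
    intro ε hε
    have := integral_Ioi_of_hasDerivAt_of_tendsto'
      (fun x hx => hΦd x (lt_of_lt_of_le hε hx.out))
      (hu_int.mono_set (Ioi_subset_Ioi hε.le)) hΦtop
    rw [this]; ring
  -- limit over shrinking ε
  have hmono : Monotone (fun n : ℕ => Ioi ((1:ℝ)/(n+1))) := by
    intro n m hnm
    apply Ioi_subset_Ioi
    apply div_le_div_of_nonneg_left zero_le_one ?_ ?_
    · positivity
    · exact_mod_cast add_le_add_left (Nat.cast_le.2 hnm) 1
  have hunion : (⋃ n : ℕ, Ioi ((1:ℝ)/(n+1))) = Ioi (0:ℝ) := by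
    ext x
    simp only [mem_iUnion, mem_Ioi]
    constructor
    · rintro ⟨n, hn⟩
      exact lt_trans (by positivity) hn
    · intro hx
      exact exists_nat_one_div_lt hx
  have hseq := tendsto_setIntegral_of_monotone (f := u)
    (fun n : ℕ => measurableSet_Ioi) hmono (by rw [hunion]; exact hu_int)
  rw [hunion] at hseq
  have h3 : Tendsto (fun n : ℕ => (1:ℝ)/(n+1)) atTop (𝓝[>] (0:ℝ)) := by
    apply tendsto_nhdsWithin_of_tendsto_nhds_of_eventually_within
    · exact tendsto_one_div_add_atTop_nhds_zero_nat
    · apply Eventually.of_forall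
      intro n
      exact mem_Ioi.2 (by positivity)
  have h4 : Tendsto (fun n : ℕ => ∫ x in Ioi ((1:ℝ)/(n+1)), u x) atTop (𝓝 (-(π/(2*a)))) := by
    have := (hΦ0.comp h3).neg
    apply this.congr
    intro n
    exact (hint_eps _ (by positivity)).symm
  have hval : ∫ x in Ioi (0:ℝ), u x = -(π/(2*a)) := tendsto_nhds_unique hseq h4
  constructor
  · rw [hTu]
    exact integrable_comp_abs' hu_int
  · rw [hTu, integral_comp_abs (f := u), hval]
    field_simp
end

section
/- For every a > 0 and every real x ≠ 0, the improper integral ∫_0^∞ cos(x·ξ)/(ξ + a) dξ converges and equals −T_a(x) = −(si(a|x|)·sin(a|x|) + ci(a|x|)·cos(a|x|)). -/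
open Filter MeasureTheory Topology

lemma key (b : ℝ) (hb : 0 < b) (f g : ℝ → ℝ) (hf : Continuous f)
    (hg : ∀ t, HasDerivAt g (f t) t) (hbd : ∀ t, |g t| ≤ 1) :
    Tendsto (fun R : ℝ => ∫ t in b..R, f t / t) atTop
      (nhds (0 - b⁻¹ * g b - ∫ t in Set.Ioi b, -((t^2:ℝ))⁻¹ * g t)) := by
  have hgc : Continuous g := continuous_iff_continuousAt.mpr fun t => (hg t).continuousAt
  have hmaj : IntegrableOn (fun t : ℝ => (t^2)⁻¹) (Set.Ioi b) := by
    have := integrableOn_Ioi_rpow_of_lt (by norm_num : (-2:ℝ) < -1) hb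
    refine this.congr_fun (fun t ht => ?_) measurableSet_Ioi
    have ht0 : (0:ℝ) < t := hb.trans ht
    dsimp only
    rw [Real.rpow_neg ht0.le, show ((2:ℝ) = ((2:ℕ):ℝ)) by norm_num, Real.rpow_natCast]
  have hInt : IntegrableOn (fun t : ℝ => -((t^2:ℝ))⁻¹ * g t) (Set.Ioi b) := by
    refine Integrable.mono' hmaj ?_ ?_
    · refine (ContinuousOn.mul ?_ hgc.continuousOn).aestronglyMeasurable measurableSet_Ioi
      refine ContinuousOn.neg (ContinuousOn.inv₀ (by fun_prop) ?_)
      intro t ht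
      exact pow_ne_zero 2 (ne_of_gt (hb.trans ht))
    · filter_upwards [ae_restrict_mem measurableSet_Ioi] with t ht
      have ht0 : (0:ℝ) < t := hb.trans ht
      have : ‖-((t^2:ℝ))⁻¹ * g t‖ = (t^2)⁻¹ * |g t| := by
        rw [norm_mul, norm_neg, Real.norm_eq_abs, Real.norm_eq_abs,
          abs_of_pos (inv_pos.mpr (by positivity))]
      rw [this]
      calc (t^2)⁻¹ * |g t| ≤ (t^2)⁻¹ * 1 := by
            exact mul_le_mul_of_nonneg_left (hbd t) (by positivity)
        _ = (t^2)⁻¹ := mul_one _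
  have h3 : Tendsto (fun R : ℝ => ∫ t in b..R, -((t^2:ℝ))⁻¹ * g t) atTop
      (nhds (∫ t in Set.Ioi b, -((t^2:ℝ))⁻¹ * g t)) :=
    intervalIntegral_tendsto_integral_Ioi b hInt tendsto_id
  have h1 : Tendsto (fun R : ℝ => R⁻¹ * g R) atTop (nhds 0) := by
    refine squeeze_zero_norm' ?_ tendsto_inv_atTop_zero
    filter_upwards [eventually_ge_atTop (1:ℝ)] with R hR
    have hR0 : (0:ℝ) < R := lt_of_lt_of_le one_pos hR
    rw [norm_mul, Real.norm_eq_abs, Real.norm_eq_abs, abs_of_pos (inv_pos.mpr hR0)]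
    calc R⁻¹ * |g R| ≤ R⁻¹ * 1 := mul_le_mul_of_nonneg_left (hbd R) (by positivity)
      _ = R⁻¹ := mul_one _
  have hcomb := (h1.sub_const (b⁻¹ * g b)).sub h3
  refine Tendsto.congr' ?_ hcomb
  filter_upwards [eventually_ge_atTop b] with R hR
  have hIcc : ∀ t ∈ Set.uIcc b R, (0:ℝ) < t := by
    intro t ht
    rw [Set.uIcc_of_le hR] at ht
    exact lt_of_lt_of_le hb ht.1
  have ibp : ∫ t in b..R, (fun t : ℝ => t⁻¹) t * f t
      = (fun t : ℝ => t⁻¹) R * g R - (fun t : ℝ => t⁻¹) b * g b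
        - ∫ t in b..R, -((t^2:ℝ))⁻¹ * g t := by
    refine intervalIntegral.integral_mul_deriv_eq_deriv_mul
      (u := fun t => t⁻¹) (u' := fun t => -((t^2:ℝ))⁻¹) (v := g) (v' := f)
      (fun t ht => hasDerivAt_inv (ne_of_gt (hIcc t ht)))
      (fun t _ => hg t) ?_ (hf.intervalIntegrable b R)
    refine ContinuousOn.intervalIntegrable ?_
    refine ContinuousOn.neg (ContinuousOn.inv₀ (by fun_prop) ?_)
    intro t ht
    exact pow_ne_zero 2 (ne_of_gt (hIcc t ht))
  have heq : ∫ t in b..R, f t / t = ∫ t in b..R, (fun t : ℝ => t⁻¹) t * f t := by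
    refine intervalIntegral.integral_congr fun t ht => ?_
    rw [div_eq_inv_mul]
  rw [heq, ibp]

lemma si_tendsto (b : ℝ) (hb : 0 < b) :
    Tendsto (fun R : ℝ => ∫ t in b..R, Real.sin t / t) atTop (nhds (- si b)) := by
  have h := key b hb Real.sin (fun t => -Real.cos t) Real.continuous_sin
    (fun t => by have h' := (Real.hasDerivAt_cos t).neg; simp only [neg_neg] at h'; exact h')
    (fun t => by rw [abs_neg]; exact Real.abs_cos_le_one t)
  have heq : - si b = 0 - b⁻¹ * (fun t => -Real.cos t) b
      - ∫ t in Set.Ioi b, -((t^2:ℝ))⁻¹ * (fun t => -Real.cos t) t := by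
    rw [si, neg_neg, h.limUnder_eq]
  rwa [heq]

lemma ci_tendsto (b : ℝ) (hb : 0 < b) :
    Tendsto (fun R : ℝ => ∫ t in b..R, Real.cos t / t) atTop (nhds (- ci b)) := by
  have h := key b hb Real.cos Real.sin Real.continuous_cos
    (fun t => Real.hasDerivAt_sin t) (fun t => Real.abs_sin_le_one t)
  have heq : - ci b = 0 - b⁻¹ * Real.sin b
      - ∫ t in Set.Ioi b, -((t^2:ℝ))⁻¹ * Real.sin t := by
    rw [ci, neg_neg, h.limUnder_eq]
  rwa [heq]

/-- `∫_0^∞ cos(xξ)/(ξ+a) dξ` converges (as an improper integral) to `-T_a(x)`. -/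
theorem stmt3 (a : ℝ) (ha : 0 < a) (x : ℝ) (hx : x ≠ 0) :
    Tendsto (fun R : ℝ => ∫ ξ in (0:ℝ)..R, Real.cos (x * ξ) / (ξ + a))
      atTop (nhds (-(Tker a x))) := by
  set c : ℝ := |x| with hc_def
  have hc : 0 < c := abs_pos.mpr hx
  set b : ℝ := a * c with hb_def
  have hb : 0 < b := mul_pos ha hc
  have hsi := si_tendsto b hb
  have hci := ci_tendsto b hb
  -- the limit function composed with V = c*R + b
  have hV : Tendsto (fun R : ℝ => c * R + b) atTop atTop :=
    tendsto_atTop_add_const_right _ b (tendsto_id.const_mul_atTop hc)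
  have hG : Tendsto (fun R : ℝ =>
      (Real.cos b * ∫ v in b..(c * R + b), Real.cos v / v)
      + Real.sin b * ∫ v in b..(c * R + b), Real.sin v / v) atTop
      (nhds (Real.cos b * (- ci b) + Real.sin b * (- si b))) := by
    simpa [Function.comp_def] using ((hci.comp hV).const_mul (Real.cos b)).add
      ((hsi.comp hV).const_mul (Real.sin b))
  have hTker : -(Tker a x) = Real.cos b * (- ci b) + Real.sin b * (- si b) := by
    rw [Tker, ← hb_def]
    ring
  rw [hTker]
  refine Tendsto.congr' ?_ hG
  filter_upwards [eventually_ge_atTop (0:ℝ)] with R hR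
  have hVb : b ≤ c * R + b := by nlinarith
  -- integrability on [b, c*R+b]
  have hpos : ∀ v ∈ Set.uIcc b (c * R + b), (0:ℝ) < v := by
    intro v hv
    rw [Set.uIcc_of_le hVb] at hv
    exact lt_of_lt_of_le hb hv.1
  have hIcos : IntervalIntegrable (fun v : ℝ => Real.cos v / v) MeasureTheory.volume b (c * R + b) := by
    refine ContinuousOn.intervalIntegrable (ContinuousOn.div (by fun_prop) (by fun_prop) ?_)
    exact fun v hv => ne_of_gt (hpos v hv)
  have hIsin : IntervalIntegrable (fun v : ℝ => Real.sin v / v) MeasureTheory.volume b (c * R + b) := by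
    refine ContinuousOn.intervalIntegrable (ContinuousOn.div (by fun_prop) (by fun_prop) ?_)
    exact fun v hv => ne_of_gt (hpos v hv)
  -- step 1: replace cos (x ξ) by cos (c ξ)
  have hcosx : ∀ ξ : ℝ, Real.cos (x * ξ) = Real.cos (c * ξ) := by
    intro ξ
    rcases abs_choice x with h | h
    · rw [hc_def, h]
    · rw [hc_def, h, neg_mul, Real.cos_neg]
  -- step 2: substitution
  have hsub : (∫ ξ in (0:ℝ)..R, Real.cos (x * ξ) / (ξ + a))
      = ∫ v in b..(c * R + b), Real.cos (v - b) / v := by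
    have h1 : ∀ ξ : ℝ, Real.cos (x * ξ) / (ξ + a)
        = (fun v : ℝ => c * (Real.cos (v - b) / v)) (c * ξ + b) := by
      intro ξ
      simp only [hcosx ξ]
      have : c * ξ + b - b = c * ξ := by ring
      rw [this]
      rw [hb_def]
      rw [show c * ξ + a * c = c * (ξ + a) by ring]
      rw [← mul_div_assoc, mul_div_mul_left _ _ (ne_of_gt hc)]
    calc (∫ ξ in (0:ℝ)..R, Real.cos (x * ξ) / (ξ + a))
        = ∫ ξ in (0:ℝ)..R, (fun v : ℝ => c * (Real.cos (v - b) / v)) (c * ξ + b) := by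
          exact intervalIntegral.integral_congr fun ξ _ => h1 ξ
      _ = c⁻¹ • ∫ v in (c * 0 + b)..(c * R + b), c * (Real.cos (v - b) / v) := by
          exact intervalIntegral.integral_comp_mul_add
            (fun v => c * (Real.cos (v - b) / v)) (ne_of_gt hc) b
      _ = ∫ v in b..(c * R + b), Real.cos (v - b) / v := by
          rw [intervalIntegral.integral_const_mul, smul_eq_mul, mul_zero, zero_add]
          rw [← mul_assoc, inv_mul_cancel₀ (ne_of_gt hc), one_mul]
  -- step 3: split
  rw [hsub]
  have hsplit : ∀ v : ℝ, Real.cos (v - b) / v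
      = Real.cos b * (Real.cos v / v) + Real.sin b * (Real.sin v / v) := by
    intro v
    rw [Real.cos_sub]
    ring
  rw [intervalIntegral.integral_congr fun v (_ : v ∈ Set.uIcc b (c*R+b)) => hsplit v]
  rw [intervalIntegral.integral_add ((hIcos.const_mul _)) ((hIsin.const_mul _)),
    intervalIntegral.integral_const_mul, intervalIntegral.integral_const_mul]
end

section
/- For every λ with 0 < λ < 1, the integral ∫_0^∞ |1 + u·(si(u)·cos(u) − ci(u)·sin(u))| / u^{1−λ} du is finite. (Equivalently, with Σ₁(u) := −u·(si(u)·cos u − ci(u)·sin u), the integral ∫_0^∞ |Σ₁(u) − 1|/u^{1−λ} du converges.) -/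
open Filter MeasureTheory Topology

/-- Integrability of a bounded measurable function times `t ^ p` on `Ioi u`. -/
lemma integ_aux {p : ℝ} (hp : p < -1) {u : ℝ} (hu : 0 < u) {f : ℝ → ℝ}
    (hf : Measurable f) (hb : ∀ t, |f t| ≤ 1) :
    IntegrableOn (fun t => f t * t ^ p) (Set.Ioi u) := by
  apply Integrable.mono' (integrableOn_Ioi_rpow_of_lt hp hu)
  · exact ((hf.mul (by fun_prop : Measurable fun t : ℝ => t ^ p)).aestronglyMeasurable).restrict
  · filter_upwards [ae_restrict_mem measurableSet_Ioi] with t ht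
    have h0 : (0:ℝ) < t := hu.trans ht
    rw [Real.norm_eq_abs, abs_mul, abs_of_nonneg (Real.rpow_nonneg h0.le p)]
    exact mul_le_of_le_one_left (Real.rpow_nonneg h0.le p) (hb t)

/-- Generic integration by parts: `∫_u^R A' t * t^p = A R * R^p - A u * u^p - p * ∫ A t * t^(p-1)`. -/
lemma parts_aux {A A' : ℝ → ℝ} (hA : ∀ x, HasDerivAt A (A' x) x) (hA' : Continuous A')
    {p u R : ℝ} (hu : 0 < u) (hR : u ≤ R) :
    ∫ t in u..R, A' t * t ^ p
      = A R * R ^ p - A u * u ^ p - p * ∫ t in u..R, A t * t ^ (p - 1) := by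
  have huIcc : Set.uIcc u R = Set.Icc u R := Set.uIcc_of_le hR
  have hpos : ∀ x ∈ Set.uIcc u R, (0:ℝ) < x := by
    intro x hx; rw [huIcc] at hx; exact lt_of_lt_of_le hu hx.1
  have h := intervalIntegral.integral_mul_deriv_eq_deriv_mul
    (u := fun t => t ^ p) (u' := fun t => p * t ^ (p - 1)) (v := A) (v' := A')
    (fun x hx => Real.hasDerivAt_rpow_const (Or.inl (hpos x hx).ne'))
    (fun x hx => hA x)
    (by
      apply ContinuousOn.intervalIntegrable
      apply ContinuousOn.mul continuousOn_const
      exact fun x hx => (Real.continuousAt_rpow_const x _ (Or.inl (hpos x hx).ne')).continuousWithinAt)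
    (hA'.intervalIntegrable u R)
  have h2 : ∫ t in u..R, A' t * t ^ p = ∫ t in u..R, (t ^ p) * A' t := by
    congr 1; ext t; ring
  rw [h2, h]
  have h3 : ∫ x in u..R, (fun t => p * t ^ (p-1)) x * A x = p * ∫ t in u..R, A t * t ^ (p - 1) := by
    rw [← intervalIntegral.integral_const_mul]
    congr 1; ext t; ring
  rw [h3]; ring

noncomputable def I1 (u : ℝ) : ℝ := ∫ t in Set.Ioi u, Real.cos t * t ^ (-2 : ℝ)
noncomputable def I2 (u : ℝ) : ℝ := ∫ t in Set.Ioi u, Real.sin t * t ^ (-2 : ℝ)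

lemma I1_integrableOn {u : ℝ} (hu : 0 < u) :
    IntegrableOn (fun t => Real.cos t * t ^ (-2 : ℝ)) (Set.Ioi u) :=
  integ_aux (by norm_num) hu Real.measurable_cos (fun t => Real.abs_cos_le_one t)

lemma I2_integrableOn {u : ℝ} (hu : 0 < u) :
    IntegrableOn (fun t => Real.sin t * t ^ (-2 : ℝ)) (Set.Ioi u) :=
  integ_aux (by norm_num) hu Real.measurable_sin (fun t => Real.abs_sin_le_one t)

lemma si_eq {u : ℝ} (hu : 0 < u) : si u = I1 u - Real.cos u * u ^ (-1 : ℝ) := by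
  have key : Tendsto (fun R : ℝ => ∫ t in u..R, Real.sin t / t) atTop
      (𝓝 (Real.cos u * u ^ (-1:ℝ) - I1 u)) := by
    have heq : ∀ᶠ R in atTop, (∫ t in u..R, Real.sin t / t)
        = Real.cos u * u ^ (-1:ℝ) - Real.cos R * R ^ (-1:ℝ) - ∫ t in u..R, Real.cos t * t ^ (-2:ℝ) := by
      filter_upwards [eventually_ge_atTop u] with R hR
      have h1 : ∫ t in u..R, Real.sin t / t = ∫ t in u..R, Real.sin t * t ^ (-1:ℝ) := by
        apply intervalIntegral.integral_congr
        intro t ht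
        rw [Set.uIcc_of_le hR] at ht
        have ht0 : (0:ℝ) < t := lt_of_lt_of_le hu ht.1
        show Real.sin t / t = Real.sin t * t ^ (-1:ℝ)
        rw [Real.rpow_neg_one, div_eq_mul_inv]
      have h2 := parts_aux (A := fun t => -Real.cos t) (A' := Real.sin)
        (fun x => by have h := (Real.hasDerivAt_cos x).neg; rw [neg_neg] at h; exact h) Real.continuous_sin (p := (-1:ℝ)) hu hR
      rw [h1, h2]
      have : ∫ t in u..R, (-Real.cos t) * t ^ ((-1:ℝ) - 1) = - ∫ t in u..R, Real.cos t * t ^ (-2:ℝ) := by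
        rw [← intervalIntegral.integral_neg]
        congr 1; ext t
        rw [show ((-1:ℝ)-1) = (-2:ℝ) by norm_num]; ring
      rw [this]; ring
    rw [tendsto_congr' heq]
    have hA : Tendsto (fun R : ℝ => Real.cos R * R ^ (-1:ℝ)) atTop (𝓝 0) := by
      apply squeeze_zero_norm' (a := fun R : ℝ => R ^ (-1:ℝ))
      · filter_upwards [eventually_gt_atTop 0] with R hR
        rw [norm_mul, Real.norm_eq_abs, Real.norm_eq_abs,
          abs_of_nonneg (Real.rpow_nonneg hR.le _)]
        exact mul_le_of_le_one_left (Real.rpow_nonneg hR.le _) (Real.abs_cos_le_one R)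
      · simpa using tendsto_rpow_neg_atTop (y := 1) one_pos
    have hB : Tendsto (fun R : ℝ => ∫ t in u..R, Real.cos t * t ^ (-2:ℝ)) atTop (𝓝 (I1 u)) :=
      intervalIntegral_tendsto_integral_Ioi u (I1_integrableOn hu) tendsto_id
    have h5 : Tendsto (fun R : ℝ => Real.cos u * u ^ (-1:ℝ) - Real.cos R * R ^ (-1:ℝ)
        - ∫ t in u..R, Real.cos t * t ^ (-2:ℝ)) atTop (𝓝 (Real.cos u * u ^ (-1:ℝ) - 0 - I1 u)) :=
      (tendsto_const_nhds.sub hA).sub hB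
    simpa using h5
  rw [si, key.limUnder_eq]; ring

lemma ci_eq_s15 {u : ℝ} (hu : 0 < u) : ci u = Real.sin u * u ^ (-1 : ℝ) - I2 u := by
  have key : Tendsto (fun R : ℝ => ∫ t in u..R, Real.cos t / t) atTop
      (𝓝 (I2 u - Real.sin u * u ^ (-1:ℝ))) := by
    have heq : ∀ᶠ R in atTop, (∫ t in u..R, Real.cos t / t)
        = Real.sin R * R ^ (-1:ℝ) - Real.sin u * u ^ (-1:ℝ) + ∫ t in u..R, Real.sin t * t ^ (-2:ℝ) := by
      filter_upwards [eventually_ge_atTop u] with R hR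
      have h1 : ∫ t in u..R, Real.cos t / t = ∫ t in u..R, Real.cos t * t ^ (-1:ℝ) := by
        apply intervalIntegral.integral_congr
        intro t ht
        rw [Set.uIcc_of_le hR] at ht
        have ht0 : (0:ℝ) < t := lt_of_lt_of_le hu ht.1
        show Real.cos t / t = Real.cos t * t ^ (-1:ℝ)
        rw [Real.rpow_neg_one, div_eq_mul_inv]
      have h2 := parts_aux (A := Real.sin) (A' := Real.cos)
        Real.hasDerivAt_sin Real.continuous_cos (p := (-1:ℝ)) hu hR
      rw [h1, h2]
      have : ∫ t in u..R, Real.sin t * t ^ ((-1:ℝ) - 1) = ∫ t in u..R, Real.sin t * t ^ (-2:ℝ) := by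
        rw [show ((-1:ℝ)-1) = (-2:ℝ) by norm_num]
      rw [this]; ring
    rw [tendsto_congr' heq]
    have hA : Tendsto (fun R : ℝ => Real.sin R * R ^ (-1:ℝ)) atTop (𝓝 0) := by
      apply squeeze_zero_norm' (a := fun R : ℝ => R ^ (-1:ℝ))
      · filter_upwards [eventually_gt_atTop 0] with R hR
        rw [norm_mul, Real.norm_eq_abs, Real.norm_eq_abs,
          abs_of_nonneg (Real.rpow_nonneg hR.le _)]
        exact mul_le_of_le_one_left (Real.rpow_nonneg hR.le _) (Real.abs_sin_le_one R)
      · simpa using tendsto_rpow_neg_atTop (y := 1) one_pos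
    have hB : Tendsto (fun R : ℝ => ∫ t in u..R, Real.sin t * t ^ (-2:ℝ)) atTop (𝓝 (I2 u)) :=
      intervalIntegral_tendsto_integral_Ioi u (I2_integrableOn hu) tendsto_id
    have h5 : Tendsto (fun R : ℝ => Real.sin R * R ^ (-1:ℝ) - Real.sin u * u ^ (-1:ℝ)
        + ∫ t in u..R, Real.sin t * t ^ (-2:ℝ)) atTop (𝓝 (0 - Real.sin u * u ^ (-1:ℝ) + I2 u)) :=
      (hA.sub tendsto_const_nhds).add hB
    simpa [sub_eq_add_neg, add_comm] using h5
  rw [ci, key.limUnder_eq]; ring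

noncomputable def Gfun (u : ℝ) : ℝ := Real.cos u * I1 u + Real.sin u * I2 u

lemma key_id {u : ℝ} (hu : 0 < u) :
    1 + u * (si u * Real.cos u - ci u * Real.sin u) = u * Gfun u := by
  rw [si_eq hu, ci_eq_s15 hu, Gfun]
  have h1 : u * u ^ (-1:ℝ) = 1 := by
    rw [Real.rpow_neg_one]; exact mul_inv_cancel₀ hu.ne'
  have hs := Real.sin_sq_add_cos_sq u
  calc 1 + u * ((I1 u - Real.cos u * u ^ (-1:ℝ)) * Real.cos u
        - (Real.sin u * u ^ (-1:ℝ) - I2 u) * Real.sin u)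
      = 1 + u * (Real.cos u * I1 u + Real.sin u * I2 u)
        - (u * u ^ (-1:ℝ)) * (Real.sin u ^ 2 + Real.cos u ^ 2) := by ring
    _ = u * (Real.cos u * I1 u + Real.sin u * I2 u) := by rw [h1, hs]; ring

lemma G_eq_J {u : ℝ} (hu : 0 < u) :
    Gfun u = ∫ t in Set.Ioi u, Real.cos (t - u) * t ^ (-2:ℝ) := by
  rw [Gfun, I1, I2, ← integral_const_mul, ← integral_const_mul,
    ← integral_add (((I1_integrableOn hu)).const_mul _) ((I2_integrableOn hu).const_mul _)]
  congr 1; ext t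
  rw [Real.cos_sub]; ring

lemma int_t2 {u : ℝ} (hu : 0 < u) : ∫ t in Set.Ioi u, t ^ (-2:ℝ) = u ^ (-1:ℝ) := by
  rw [integral_Ioi_rpow_of_lt (by norm_num) hu]; norm_num

lemma int_t3 {u : ℝ} (hu : 0 < u) : ∫ t in Set.Ioi u, t ^ (-3:ℝ) = u ^ (-2:ℝ) / 2 := by
  rw [integral_Ioi_rpow_of_lt (by norm_num) hu]; norm_num

lemma bound_int {u p : ℝ} (hp : p < -1) (hu : 0 < u) {f : ℝ → ℝ}
    (hb : ∀ t, |f t| ≤ 1) :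
    |∫ t in Set.Ioi u, f t * t ^ p| ≤ ∫ t in Set.Ioi u, t ^ p := by
  rw [← Real.norm_eq_abs]
  apply norm_integral_le_of_norm_le (integrableOn_Ioi_rpow_of_lt hp hu)
  filter_upwards [ae_restrict_mem measurableSet_Ioi] with t ht
  have h0 : (0:ℝ) < t := hu.trans ht
  rw [Real.norm_eq_abs, abs_mul, abs_of_nonneg (Real.rpow_nonneg h0.le p)]
  exact mul_le_of_le_one_left (Real.rpow_nonneg h0.le p) (hb t)

lemma bound1 {u : ℝ} (hu : 0 < u) : |Gfun u| ≤ u ^ (-1:ℝ) := by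
  rw [G_eq_J hu]
  calc |∫ t in Set.Ioi u, Real.cos (t - u) * t ^ (-2:ℝ)| ≤ ∫ t in Set.Ioi u, t ^ (-2:ℝ) :=
        bound_int (by norm_num) hu (fun t => Real.abs_cos_le_one _)
    _ = u ^ (-1:ℝ) := int_t2 hu

lemma G_eq_K {u : ℝ} (hu : 0 < u) :
    Gfun u = 2 * ∫ t in Set.Ioi u, Real.sin (t - u) * t ^ (-3:ℝ) := by
  have hJint : IntegrableOn (fun t => Real.cos (t - u) * t ^ (-2:ℝ)) (Set.Ioi u) :=
    integ_aux (by norm_num) hu (by fun_prop) (fun t => Real.abs_cos_le_one _)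
  have hKint : IntegrableOn (fun t => Real.sin (t - u) * t ^ (-3:ℝ)) (Set.Ioi u) :=
    integ_aux (by norm_num) hu (by fun_prop) (fun t => Real.abs_sin_le_one _)
  have hder : ∀ x : ℝ, HasDerivAt (fun t => Real.sin (t - u)) (Real.cos (x - u)) x := by
    intro x
    have h := (Real.hasDerivAt_sin (x - u)).comp x ((hasDerivAt_id x).sub_const u)
    rw [mul_one] at h
    exact h
  have hT1 : Tendsto (fun R : ℝ => ∫ t in u..R, Real.cos (t - u) * t ^ (-2:ℝ)) atTop
      (𝓝 (Gfun u)) := by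
    rw [G_eq_J hu]
    exact intervalIntegral_tendsto_integral_Ioi u hJint tendsto_id
  have hT2 : Tendsto (fun R : ℝ => ∫ t in u..R, Real.cos (t - u) * t ^ (-2:ℝ)) atTop
      (𝓝 (2 * ∫ t in Set.Ioi u, Real.sin (t - u) * t ^ (-3:ℝ))) := by
    have heq : ∀ᶠ R in atTop, (∫ t in u..R, Real.cos (t - u) * t ^ (-2:ℝ))
        = Real.sin (R - u) * R ^ (-2:ℝ)
          + 2 * ∫ t in u..R, Real.sin (t - u) * t ^ (-3:ℝ) := by
      filter_upwards [eventually_ge_atTop u] with R hR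
      have h2 := parts_aux (A := fun t => Real.sin (t - u)) (A' := fun t => Real.cos (t - u))
        hder (by fun_prop) (p := (-2:ℝ)) hu hR
      rw [h2]
      have h3 : ∫ t in u..R, Real.sin (t - u) * t ^ ((-2:ℝ) - 1)
          = ∫ t in u..R, Real.sin (t - u) * t ^ (-3:ℝ) := by
        rw [show ((-2:ℝ) - 1) = (-3:ℝ) by norm_num]
      rw [h3]
      simp only [sub_self, Real.sin_zero, zero_mul, sub_zero]
      ring
    rw [tendsto_congr' heq]
    have hA : Tendsto (fun R : ℝ => Real.sin (R - u) * R ^ (-2:ℝ)) atTop (𝓝 0) := by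
      apply squeeze_zero_norm' (a := fun R : ℝ => R ^ (-2:ℝ))
      · filter_upwards [eventually_gt_atTop 0] with R hR
        rw [norm_mul, Real.norm_eq_abs, Real.norm_eq_abs,
          abs_of_nonneg (Real.rpow_nonneg hR.le _)]
        exact mul_le_of_le_one_left (Real.rpow_nonneg hR.le _) (Real.abs_sin_le_one _)
      · simpa using tendsto_rpow_neg_atTop (y := 2) (by norm_num)
    have hB : Tendsto (fun R : ℝ => ∫ t in u..R, Real.sin (t - u) * t ^ (-3:ℝ)) atTop
        (𝓝 (∫ t in Set.Ioi u, Real.sin (t - u) * t ^ (-3:ℝ))) :=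
      intervalIntegral_tendsto_integral_Ioi u hKint tendsto_id
    have h5 := hA.add (hB.const_mul 2)
    simpa using h5
  exact tendsto_nhds_unique hT1 hT2

lemma bound2 {u : ℝ} (hu : 0 < u) : |Gfun u| ≤ u ^ (-2:ℝ) := by
  rw [G_eq_K hu, abs_mul, abs_two]
  calc 2 * |∫ t in Set.Ioi u, Real.sin (t - u) * t ^ (-3:ℝ)|
      ≤ 2 * ∫ t in Set.Ioi u, t ^ (-3:ℝ) := by
        have := bound_int (f := fun t => Real.sin (t - u)) (by norm_num : (-3:ℝ) < -1) hu
          (fun t => Real.abs_sin_le_one _)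
        linarith
    _ = u ^ (-2:ℝ) := by rw [int_t3 hu]; ring

lemma meas_I1 : Measurable I1 := by
  have h : I1 = fun u => ∫ t, Set.indicator (Set.Ioi u) (fun t => Real.cos t * t ^ (-2:ℝ)) t :=
    funext fun u => (integral_indicator measurableSet_Ioi).symm
  rw [h]
  have h2 : StronglyMeasurable (fun p : ℝ × ℝ =>
      Set.indicator (Set.Ioi p.1) (fun t => Real.cos t * t ^ (-2:ℝ)) p.2) := by
    have : (fun p : ℝ × ℝ => Set.indicator (Set.Ioi p.1) (fun t => Real.cos t * t ^ (-2:ℝ)) p.2)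
        = fun p : ℝ × ℝ => if p.1 < p.2 then Real.cos p.2 * p.2 ^ (-2:ℝ) else 0 := by
      ext p; rw [Set.indicator_apply]; simp [Set.mem_Ioi]
    rw [this]
    exact (Measurable.ite (measurableSet_lt measurable_fst measurable_snd)
      (by fun_prop) measurable_const).stronglyMeasurable
  exact h2.integral_prod_right'.measurable

lemma meas_I2 : Measurable I2 := by
  have h : I2 = fun u => ∫ t, Set.indicator (Set.Ioi u) (fun t => Real.sin t * t ^ (-2:ℝ)) t :=
    funext fun u => (integral_indicator measurableSet_Ioi).symm
  rw [h]
  have h2 : StronglyMeasurable (fun p : ℝ × ℝ =>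
      Set.indicator (Set.Ioi p.1) (fun t => Real.sin t * t ^ (-2:ℝ)) p.2) := by
    have : (fun p : ℝ × ℝ => Set.indicator (Set.Ioi p.1) (fun t => Real.sin t * t ^ (-2:ℝ)) p.2)
        = fun p : ℝ × ℝ => if p.1 < p.2 then Real.sin p.2 * p.2 ^ (-2:ℝ) else 0 := by
      ext p; rw [Set.indicator_apply]; simp [Set.mem_Ioi]
    rw [this]
    exact (Measurable.ite (measurableSet_lt measurable_fst measurable_snd)
      (by fun_prop) measurable_const).stronglyMeasurable
  exact h2.integral_prod_right'.measurable

/-- for `0 < λ < 1`,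
`∫_0^∞ |1 + u (si(u) cos u - ci(u) sin u)| / u^{1-λ} du < ∞`. -/
theorem stmt15 (lam : ℝ) (hlam0 : 0 < lam) (hlam1 : lam < 1) :
    IntegrableOn
      (fun u : ℝ => |1 + u * (si u * Real.cos u - ci u * Real.sin u)| / u ^ (1 - lam))
      (Set.Ioi 0) := by
  set F : ℝ → ℝ := fun u => |u * Gfun u| / u ^ (1 - lam) with hF
  have hFmeas : Measurable F := by
    apply Measurable.div
    · exact (measurable_id.mul ((Real.measurable_cos.mul meas_I1).add
        (Real.measurable_sin.mul meas_I2))).abs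
    · fun_prop
  have hFnonneg : ∀ u : ℝ, 0 < u → ‖F u‖ = F u := by
    intro u hu
    have : 0 ≤ F u :=
      div_nonneg (abs_nonneg _) (Real.rpow_pos_of_pos hu _).le
    rw [Real.norm_eq_abs, abs_of_nonneg this]
  have hGF : ∀ u : ℝ, 0 < u → |u * Gfun u| = u * |Gfun u| := by
    intro u hu; rw [abs_mul, abs_of_pos hu]
  have hF1 : IntegrableOn F (Set.Ioc 0 1) := by
    apply Integrable.mono'
      ((intervalIntegrable_iff_integrableOn_Ioc_of_le (by norm_num : (0:ℝ) ≤ 1)).mp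
        (intervalIntegral.intervalIntegrable_rpow' (by linarith : (-1:ℝ) < lam - 1)))
      hFmeas.aestronglyMeasurable.restrict
    filter_upwards [ae_restrict_mem measurableSet_Ioc] with u hu
    have hu0 : 0 < u := hu.1
    rw [hFnonneg u hu0, hF]
    have hnum : |u * Gfun u| ≤ 1 := by
      rw [hGF u hu0]
      calc u * |Gfun u| ≤ u * u ^ (-1:ℝ) :=
            mul_le_mul_of_nonneg_left (bound1 hu0) hu0.le
        _ = 1 := by rw [Real.rpow_neg_one]; exact mul_inv_cancel₀ hu0.ne'
    have hpow : (0:ℝ) < u ^ (1 - lam) := Real.rpow_pos_of_pos hu0 _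
    calc |u * Gfun u| / u ^ (1 - lam) ≤ 1 / u ^ (1 - lam) := by gcongr
      _ = u ^ (lam - 1) := by
          rw [show (lam - 1) = -(1 - lam) by ring, Real.rpow_neg hu0.le, one_div]
  have hF2 : IntegrableOn F (Set.Ioi 1) := by
    apply Integrable.mono'
      (integrableOn_Ioi_rpow_of_lt (by linarith : lam - 2 < -1) one_pos)
      hFmeas.aestronglyMeasurable.restrict
    filter_upwards [ae_restrict_mem measurableSet_Ioi] with u hu
    have hu0 : (0:ℝ) < u := lt_trans one_pos hu
    rw [hFnonneg u hu0, hF]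
    have hnum : |u * Gfun u| ≤ u ^ (-1:ℝ) := by
      rw [hGF u hu0]
      calc u * |Gfun u| ≤ u * u ^ (-2:ℝ) :=
            mul_le_mul_of_nonneg_left (bound2 hu0) hu0.le
        _ = u ^ (-1:ℝ) := by
            rw [show u * u ^ (-2:ℝ) = u ^ (1:ℝ) * u ^ (-2:ℝ) by rw [Real.rpow_one],
              ← Real.rpow_add hu0]
            norm_num
    have hpow : (0:ℝ) < u ^ (1 - lam) := Real.rpow_pos_of_pos hu0 _
    calc |u * Gfun u| / u ^ (1 - lam) ≤ u ^ (-1:ℝ) / u ^ (1 - lam) := by gcongr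
      _ = u ^ (lam - 2) := by
          rw [← Real.rpow_sub hu0]
          ring_nf
  have hFint : IntegrableOn F (Set.Ioi 0) := by
    rw [← Set.Ioc_union_Ioi_eq_Ioi (zero_le_one' ℝ)]
    exact hF1.union hF2
  apply hFint.congr_fun _ measurableSet_Ioi
  intro u hu
  rw [Set.mem_Ioi] at hu
  show |u * Gfun u| / u ^ (1 - lam)
      = |1 + u * (si u * Real.cos u - ci u * Real.sin u)| / u ^ (1 - lam)
  rw [key_id hu]
end
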